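/- arXiv:2507.19767 — 2 statements merged into one kernel-verified Lean document; each statement's English description precedes it below -/
import Mathlib

section
/- Let p > 1 be real, n ∈ ℕ, and let f(z) = Σ_{j≥0} c_j z^j be holomorphic, bounded, and zero-free on 𝔻, and assume f is not a polynomial of degree at most n. Then there exist ε₀ > 0 and C > 0 such that for every ε ∈ (0, ε₀) and every d = (d₀, …, dₙ) ∈ ℂ^{n+1} with |d| ≤ ε, there exists a holomorphic, bounded, zero-free function f* on 𝔻 whose Taylor coefficients satisfy c_j(f*) = c_j + d_j for all j = 0, 1, …, n, and whose Hardy norm satisfies | ‖f*‖_p − ‖f‖_p | ≤ C ε. -/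
open Complex Metric Set

noncomputable section

/-- The open unit disk in ℂ. -/
def unitDisk : Set ℂ := Metric.ball 0 1

/-- The `n`-th Taylor coefficient of `f` at the origin. -/
def coeff (f : ℂ → ℂ) (n : ℕ) : ℂ := iteratedDeriv n f 0 / (n.factorial : ℂ)

/-- The `p`-integral mean of `f` on the circle of radius `r`. -/
def hardyMean (p : ℝ) (f : ℂ → ℂ) (r : ℝ) : ℝ :=
  ((1 / (2 * Real.pi)) * ∫ θ in (0 : ℝ)..(2 * Real.pi),
    ‖f ((r : ℂ) * Complex.exp ((θ : ℂ) * Complex.I))‖ ^ p) ^ (1 / p)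

/-- The Hardy `H^p` norm of `f` on the unit disk. -/
def hardyNorm (p : ℝ) (f : ℂ → ℂ) : ℝ :=
  sSup {x : ℝ | ∃ r : ℝ, 0 < r ∧ r < 1 ∧ x = hardyMean p f r}

/-! ### Auxiliary lemmas -/

lemma coeff_eq_of_hasSum {g : ℂ → ℂ} {a : ℕ → ℂ}
    (h : ∀ᶠ z in nhds (0:ℂ), HasSum (fun m => a m * z ^ m) (g z)) (k : ℕ) :
    coeff g k = a k := by
  set q := FormalMultilinearSeries.ofScalars ℂ a with hq
  have hc : ∀ m, q.coeff m = a m := by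
    intro m
    simp [hq, FormalMultilinearSeries.ofScalars, FormalMultilinearSeries.coeff,
      List.ofFn_const, Pi.one_def]
  have hp : HasFPowerSeriesAt g q 0 := by
    rw [hasFPowerSeriesAt_iff]
    filter_upwards [h] with z hz
    simpa [hc, smul_eq_mul, mul_comm, zero_add] using hz
  obtain ⟨r, hr⟩ := hp
  have h2 := hr.factorial_smul (1:ℂ) k
  have h3 : (q k fun _ => (1:ℂ)) = a k := by
    have := q.apply_eq_pow_smul_coeff (n := k) (z := (1:ℂ))
    simpa [hc] using this
  rw [coeff, iteratedDeriv_eq_iteratedFDeriv]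
  rw [← h2, h3]
  have : (k.factorial : ℂ) ≠ 0 := by exact_mod_cast Nat.factorial_ne_zero k
  field_simp [nsmul_eq_mul]
  exact nsmul_eq_mul _ _

/-- Triangular solve: `tsolve c d` is the sequence `u` with `∑_{j≤k} c (k-j) * u j = d k`. -/
def tsolve (c d : ℕ → ℂ) : ℕ → ℂ
  | k => (d k - ∑ j : Fin k, c (k - j) * tsolve c d j) / c 0
termination_by k => k
decreasing_by exact j.isLt

lemma tsolve_def (c d : ℕ → ℂ) (k : ℕ) :
    tsolve c d k = (d k - ∑ j : Fin k, c (k - j) * tsolve c d j) / c 0 := by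
  rw [tsolve]

lemma tsolve_spec (c d : ℕ → ℂ) (hc : c 0 ≠ 0) (k : ℕ) :
    ∑ j ∈ Finset.range (k + 1), c (k - j) * tsolve c d j = d k := by
  rw [Finset.sum_range_succ]
  rw [Finset.sum_range fun j => c (k - j) * tsolve c d j] at *
  rw [tsolve_def c d k]
  field_simp
  rw [Nat.sub_self]; ring

lemma tsolve_add (c d₁ d₂ : ℕ → ℂ) (k : ℕ) :
    tsolve c (d₁ + d₂) k = tsolve c d₁ k + tsolve c d₂ k := by
  induction k using Nat.strong_induction_on with
  | _ k ih =>
    rw [tsolve_def, tsolve_def, tsolve_def]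
    have : ∑ j : Fin k, c (k - j) * tsolve c (d₁ + d₂) j
        = (∑ j : Fin k, c (k - j) * tsolve c d₁ j) + ∑ j : Fin k, c (k - j) * tsolve c d₂ j := by
      rw [← Finset.sum_add_distrib]
      refine Finset.sum_congr rfl fun j _ => ?_
      rw [ih j j.isLt]; ring
    rw [this, Pi.add_apply]
    ring

lemma tsolve_smul (c : ℕ → ℂ) (a : ℂ) (d : ℕ → ℂ) (k : ℕ) :
    tsolve c (a • d) k = a * tsolve c d k := by
  induction k using Nat.strong_induction_on with
  | _ k ih =>
    rw [tsolve_def, tsolve_def]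
    have : ∑ j : Fin k, c (k - j) * tsolve c (a • d) j
        = a * ∑ j : Fin k, c (k - j) * tsolve c d j := by
      rw [Finset.mul_sum]
      refine Finset.sum_congr rfl fun j _ => ?_
      rw [ih j j.isLt]; ring
    rw [this, Pi.smul_apply, smul_eq_mul]
    ring

lemma mem_disk_of_circle {r : ℝ} (h0 : 0 ≤ r) (h1 : r < 1) (θ : ℝ) :
    (r : ℂ) * Complex.exp ((θ : ℂ) * Complex.I) ∈ unitDisk := by
  simp only [unitDisk, mem_ball, dist_zero_right, norm_mul, Complex.norm_real,
    Real.norm_eq_abs, Complex.norm_exp_ofReal_mul_I, _root_.abs_of_nonneg h0, mul_one]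
  exact h1

lemma integrand_cont {f : ℂ → ℂ} (hf : ContinuousOn f unitDisk) {r : ℝ} (h0 : 0 ≤ r)
    (h1 : r < 1) (p : ℝ) (hp : 0 < p) :
    Continuous fun θ : ℝ => ‖f ((r : ℂ) * Complex.exp ((θ : ℂ) * Complex.I))‖ ^ p := by
  have hc : Continuous fun θ : ℝ => (r : ℂ) * Complex.exp ((θ : ℂ) * Complex.I) := by
    fun_prop
  have h2 : Continuous fun θ : ℝ => f ((r : ℂ) * Complex.exp ((θ : ℂ) * Complex.I)) :=
    hf.comp_continuous hc (mem_disk_of_circle h0 h1)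
  exact (continuous_norm.comp h2).rpow_const fun _ => Or.inr hp.le

lemma hardyMean_nonneg (p : ℝ) (f : ℂ → ℂ) (r : ℝ) : 0 ≤ hardyMean p f r := by
  apply Real.rpow_nonneg
  apply mul_nonneg (by positivity)
  apply intervalIntegral.integral_nonneg (by positivity)
  intro θ _
  exact Real.rpow_nonneg (norm_nonneg _) _

lemma hardyMean_le_const {f : ℂ → ℂ} (hf : ContinuousOn f unitDisk) {p : ℝ} (hp : 0 < p)
    {M : ℝ} (hM0 : 0 ≤ M) (hM : ∀ z ∈ unitDisk, ‖f z‖ ≤ M)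
    {r : ℝ} (h0 : 0 < r) (h1 : r < 1) : hardyMean p f r ≤ M := by
  have hI : (∫ θ in (0:ℝ)..(2*Real.pi),
      ‖f ((r : ℂ) * Complex.exp ((θ : ℂ) * Complex.I))‖ ^ p)
      ≤ ∫ _ in (0:ℝ)..(2*Real.pi), M ^ p := by
    apply intervalIntegral.integral_mono_on (by positivity)
    · exact (integrand_cont hf h0.le h1 p hp).intervalIntegrable _ _
    · exact intervalIntegrable_const
    · intro θ _
      exact Real.rpow_le_rpow (norm_nonneg _) (hM _ (mem_disk_of_circle h0.le h1 θ)) hp.le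
  have h2 : (1 / (2 * Real.pi)) * (∫ θ in (0:ℝ)..(2*Real.pi),
      ‖f ((r : ℂ) * Complex.exp ((θ : ℂ) * Complex.I))‖ ^ p) ≤ M ^ p := by
    rw [intervalIntegral.integral_const, smul_eq_mul] at hI
    calc (1 / (2 * Real.pi)) * _ ≤ (1 / (2 * Real.pi)) * ((2 * Real.pi - 0) * M ^ p) := by
          apply mul_le_mul_of_nonneg_left hI (by positivity)
      _ = M ^ p := by
          rw [sub_zero]
          field_simp
  calc hardyMean p f r ≤ (M ^ p) ^ (1/p) := by
        apply Real.rpow_le_rpow _ h2 (by positivity)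
        apply mul_nonneg (by positivity)
        apply intervalIntegral.integral_nonneg (by positivity)
        intro θ _; exact Real.rpow_nonneg (norm_nonneg _) _
    _ = M := by
        rw [← Real.rpow_mul hM0, mul_one_div, div_self hp.ne', Real.rpow_one]

lemma hardyMean_le_of_le {f g : ℂ → ℂ} (hf : ContinuousOn f unitDisk)
    (hg : ContinuousOn g unitDisk) {p : ℝ} (hp : 0 < p) {t : ℝ} (ht : 0 ≤ t)
    (hle : ∀ z ∈ unitDisk, ‖g z‖ ≤ t * ‖f z‖)
    {r : ℝ} (h0 : 0 < r) (h1 : r < 1) :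
    hardyMean p g r ≤ t * hardyMean p f r := by
  set If := ∫ θ in (0:ℝ)..(2*Real.pi),
      ‖f ((r : ℂ) * Complex.exp ((θ : ℂ) * Complex.I))‖ ^ p with hIf
  set Ig := ∫ θ in (0:ℝ)..(2*Real.pi),
      ‖g ((r : ℂ) * Complex.exp ((θ : ℂ) * Complex.I))‖ ^ p with hIg
  have hIf0 : 0 ≤ If := by
    apply intervalIntegral.integral_nonneg (by positivity)
    intro θ _; exact Real.rpow_nonneg (norm_nonneg _) _
  have hIg0 : 0 ≤ Ig := by
    apply intervalIntegral.integral_nonneg (by positivity)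
    intro θ _; exact Real.rpow_nonneg (norm_nonneg _) _
  have hmono : Ig ≤ t ^ p * If := by
    have : t ^ p * If = ∫ θ in (0:ℝ)..(2*Real.pi),
        t ^ p * ‖f ((r : ℂ) * Complex.exp ((θ : ℂ) * Complex.I))‖ ^ p := by
      rw [hIf, ← intervalIntegral.integral_const_mul]
    rw [this]
    apply intervalIntegral.integral_mono_on (by positivity)
    · exact (integrand_cont hg h0.le h1 p hp).intervalIntegrable _ _
    · exact (continuous_const.mul (integrand_cont hf h0.le h1 p hp)).intervalIntegrable _ _
    · intro θ _
      rw [← Real.mul_rpow ht (norm_nonneg _)]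
      exact Real.rpow_le_rpow (norm_nonneg _)
        (hle _ (mem_disk_of_circle h0.le h1 θ)) hp.le
  have key : (1 / (2 * Real.pi)) * Ig ≤ t ^ p * ((1 / (2 * Real.pi)) * If) := by
    rw [mul_left_comm]
    exact mul_le_mul_of_nonneg_left hmono (by positivity)
  calc hardyMean p g r = ((1 / (2 * Real.pi)) * Ig) ^ (1/p) := rfl
    _ ≤ (t ^ p * ((1 / (2 * Real.pi)) * If)) ^ (1/p) :=
        Real.rpow_le_rpow (by positivity) key (by positivity)
    _ = (t ^ p) ^ (1/p) * ((1 / (2 * Real.pi)) * If) ^ (1/p) :=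
        Real.mul_rpow (by positivity) (by positivity)
    _ = t * hardyMean p f r := by
        rw [← Real.rpow_mul ht, mul_one_div, div_self hp.ne', Real.rpow_one]
        rfl

lemma hardyNorm_nonneg (p : ℝ) (f : ℂ → ℂ) : 0 ≤ hardyNorm p f := by
  apply Real.sSup_nonneg
  rintro x ⟨r, _, _, rfl⟩
  exact hardyMean_nonneg p f r

lemma hardyNorm_le_mul {f g : ℂ → ℂ} {p : ℝ} {t : ℝ} (ht : 0 ≤ t)
    (h : ∀ r : ℝ, 0 < r → r < 1 → hardyMean p g r ≤ t * hardyMean p f r)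
    (hbf : BddAbove {x : ℝ | ∃ r : ℝ, 0 < r ∧ r < 1 ∧ x = hardyMean p f r}) :
    hardyNorm p g ≤ t * hardyNorm p f := by
  apply Real.sSup_le
  · rintro x ⟨r, hr1, hr2, rfl⟩
    refine (h r hr1 hr2).trans (mul_le_mul_of_nonneg_left ?_ ht)
    exact le_csSup hbf ⟨r, hr1, hr2, rfl⟩
  · exact mul_nonneg ht (hardyNorm_nonneg p f)

/-! ### The main theorem -/

/-- free perturbation of the first `n+1` Taylor coefficients of a bounded
nonvanishing `H^p` function with small change of the Hardy norm. -/
theorem stmt12 (p : ℝ) (hp : 1 < p) (n : ℕ) (f : ℂ → ℂ)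
    (hf : DifferentiableOn ℂ f unitDisk)
    (hb : ∃ M : ℝ, ∀ z ∈ unitDisk, ‖f z‖ ≤ M)
    (hzf : ∀ z ∈ unitDisk, f z ≠ 0)
    (hnp : ¬ ∃ q : Polynomial ℂ, q.natDegree ≤ n ∧
      Set.EqOn f (fun z => q.eval z) unitDisk) :
    ∃ ε₀ > (0 : ℝ), ∃ C > (0 : ℝ), ∀ ε : ℝ, 0 < ε → ε < ε₀ →
      ∀ d : Fin (n + 1) → ℂ, Real.sqrt (∑ j, ‖d j‖ ^ 2) ≤ ε →
        ∃ fs : ℂ → ℂ, DifferentiableOn ℂ fs unitDisk ∧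
          (∃ M : ℝ, ∀ z ∈ unitDisk, ‖fs z‖ ≤ M) ∧
          (∀ z ∈ unitDisk, fs z ≠ 0) ∧
          (∀ j : Fin (n + 1), coeff fs j = coeff f j + d j) ∧
          |hardyNorm p fs - hardyNorm p f| ≤ C * ε := by
  classical
  have hp' : (0:ℝ) < p := lt_trans one_pos hp
  set c : ℕ → ℂ := coeff f with hcdef
  have hc0 : c 0 ≠ 0 := by
    have h0 : (0:ℂ) ∈ unitDisk := mem_ball_self one_pos
    have : c 0 = f 0 := by simp [hcdef, coeff]
    rw [this]
    exact hzf 0 h0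
  -- the linear solve map
  set extF : (Fin (n + 1) → ℂ) → (ℕ → ℂ) :=
    fun d k => if h : k < n + 1 then d ⟨k, h⟩ else 0 with hextF
  have extF_add : ∀ d₁ d₂, extF (d₁ + d₂) = extF d₁ + extF d₂ := by
    intro d₁ d₂; funext k; simp only [hextF, Pi.add_apply]; split_ifs <;> simp
  have extF_smul : ∀ (a : ℂ) d, extF (a • d) = a • extF d := by
    intro a d; funext k; simp only [hextF, Pi.smul_apply, smul_eq_mul]; split_ifs <;> simp
  set L : (Fin (n + 1) → ℂ) →ₗ[ℂ] (Fin (n + 1) → ℂ) :=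
    { toFun := fun d j => tsolve c (extF d) j
      map_add' := fun d₁ d₂ => funext fun j => by
        simp only [extF_add, tsolve_add, Pi.add_apply]
      map_smul' := fun a d => funext fun j => by
        simp only [extF_smul, tsolve_smul, Pi.smul_apply, smul_eq_mul, RingHom.id_apply] } with hL
  set J := L.toContinuousLinearMap with hJ
  set K : ℝ := ‖J‖ + 1 with hKdef
  have hK : 0 < K := by positivity
  have hNf0 : 0 ≤ hardyNorm p f := hardyNorm_nonneg p f
  refine ⟨1 / (2 * (n + 1) * K), by positivity, (n + 1) * K * (hardyNorm p f + 1), by positivity,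
    ?_⟩
  intro ε hε hεlt d hd
  -- norm bound on d
  have hdnorm : ‖d‖ ≤ ε := by
    rw [pi_norm_le_iff_of_nonneg hε.le]
    intro j
    have h1 : ‖d j‖ = Real.sqrt (‖d j‖ ^ 2) :=
      (Real.sqrt_sq (norm_nonneg _)).symm
    calc ‖d j‖ = ‖d j‖ := rfl
      _ = Real.sqrt (‖d j‖ ^ 2) := h1
      _ ≤ Real.sqrt (∑ i, ‖d i‖ ^ 2) :=
          Real.sqrt_le_sqrt (Finset.single_le_sum (f := fun i => ‖d i‖ ^ 2)
            (fun i _ => sq_nonneg _) (Finset.mem_univ j))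
      _ ≤ ε := hd
  set D : ℕ → ℂ := extF d with hD
  have htb : ∀ j, j ≤ n → ‖tsolve c D j‖ ≤ K * ε := by
    intro j hj
    have hjlt : j < n + 1 := by omega
    have h1 : tsolve c D j = L d ⟨j, hjlt⟩ := rfl
    have h2 : ‖L d ⟨j, hjlt⟩‖ ≤ ‖L d‖ := norm_le_pi_norm (L d) ⟨j, hjlt⟩
    have h3 : ‖J d‖ ≤ ‖J‖ * ‖d‖ := J.le_opNorm d
    have h4 : J d = L d := rfl
    calc ‖tsolve c D j‖ = ‖L d ⟨j, hjlt⟩‖ := by rw [h1]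
      _ ≤ ‖L d‖ := h2
      _ = ‖J d‖ := by rw [h4]
      _ ≤ ‖J‖ * ‖d‖ := h3
      _ ≤ K * ε := by
          apply mul_le_mul (le_add_of_nonneg_right zero_le_one) hdnorm (norm_nonneg d) hK.le
  set q : ℕ → ℂ := fun j => (if j = 0 then 1 else 0) + tsolve c D j with hqdef
  set Q : ℂ → ℂ := fun z => ∑ j ∈ Finset.range (n + 1), q j * z ^ j with hQdef
  set fs : ℂ → ℂ := fun z => f z * Q z with hfsdef
  set δ : ℝ := ∑ j ∈ Finset.range (n + 1), ‖tsolve c D j‖ with hδdef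
  have hδ0 : 0 ≤ δ := Finset.sum_nonneg fun j _ => norm_nonneg _
  have hδK : δ ≤ (n + 1) * (K * ε) := by
    have := Finset.sum_le_card_nsmul (Finset.range (n + 1))
      (fun j => ‖tsolve c D j‖) (K * ε)
      (fun j hj => htb j (by simpa [Nat.lt_succ_iff] using Finset.mem_range.mp hj))
    simpa [Finset.card_range, nsmul_eq_mul] using this
  have hδhalf : δ ≤ 1 / 2 := by
    have h1 : (n + 1 : ℝ) * (K * ε) < (n + 1) * (K * (1 / (2 * (n + 1) * K))) := by
      apply mul_lt_mul_of_pos_left (mul_lt_mul_of_pos_left hεlt hK) (by positivity)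
    have h2 : (n + 1 : ℝ) * (K * (1 / (2 * (n + 1) * K))) = 1 / 2 := by
      field_simp
    have h3 := lt_of_le_of_lt hδK h1
    rw [h2] at h3
    exact h3.le
  -- properties of Q
  have hQsub : ∀ z : ℂ, Q z - 1 = ∑ j ∈ Finset.range (n + 1), tsolve c D j * z ^ j := by
    intro z
    have h1 : Q z = (∑ j ∈ Finset.range (n + 1), (if j = 0 then (1:ℂ) else 0) * z ^ j)
        + ∑ j ∈ Finset.range (n + 1), tsolve c D j * z ^ j := by
      rw [hQdef, ← Finset.sum_add_distrib]
      exact Finset.sum_congr rfl fun j _ => by rw [hqdef, add_mul]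
    have h2 : (∑ j ∈ Finset.range (n + 1), (if j = 0 then (1:ℂ) else 0) * z ^ j) = 1 := by
      rw [Finset.sum_congr rfl fun j _ => by rw [ite_mul, one_mul, zero_mul]]
      rw [Finset.sum_ite_eq' (Finset.range (n + 1)) 0 (fun j => z ^ j)]
      simp
    rw [h1, h2]; ring
  have hQ1 : ∀ z ∈ unitDisk, ‖Q z - 1‖ ≤ δ := by
    intro z hz
    rw [hQsub z]
    calc ‖∑ j ∈ Finset.range (n + 1), tsolve c D j * z ^ j‖
        ≤ ∑ j ∈ Finset.range (n + 1), ‖tsolve c D j * z ^ j‖ :=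
          norm_sum_le _ _
      _ ≤ δ := by
          rw [hδdef]
          apply Finset.sum_le_sum
          intro j _
          rw [norm_mul, norm_pow]
          have hz1 : ‖z‖ < 1 := by
            simpa [unitDisk, Complex.dist_eq] using hz
          exact mul_le_of_le_one_right (norm_nonneg _)
            (pow_le_one₀ (norm_nonneg _) hz1.le)
  have hQu : ∀ z ∈ unitDisk, ‖Q z‖ ≤ 1 + δ := by
    intro z hz
    have : Q z = 1 + (Q z - 1) := by ring
    rw [this]
    calc ‖1 + (Q z - 1)‖ ≤ ‖(1:ℂ)‖ + ‖Q z - 1‖ :=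
          norm_add_le _ _
      _ ≤ 1 + δ := by simpa using hQ1 z hz
  have hQl : ∀ z ∈ unitDisk, 1 - δ ≤ ‖Q z‖ := by
    intro z hz
    have h1 : ‖(1:ℂ)‖ - ‖(1:ℂ) - Q z‖ ≤ ‖(1:ℂ) - ((1:ℂ) - Q z)‖ := norm_sub_norm_le _ _
    simp only [norm_one, sub_sub_cancel] at h1
    have h2 : ‖(1:ℂ) - Q z‖ = ‖Q z - 1‖ := by
      rw [← norm_neg]; congr 1; ring
    rw [h2] at h1
    have := hQ1 z hz
    calc 1 - δ ≤ 1 - ‖Q z - 1‖ := by linarith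
      _ ≤ ‖Q z‖ := h1
      _ = ‖Q z‖ := rfl
  have hQpos : ∀ z ∈ unitDisk, 0 < ‖Q z‖ := fun z hz =>
    lt_of_lt_of_le (by linarith) (hQl z hz)
  have hQD : Differentiable ℂ Q := by
    rw [hQdef]
    apply Differentiable.fun_sum
    intro j _
    exact (differentiable_const _).mul (differentiable_pow j)
  have hfsD : DifferentiableOn ℂ fs unitDisk := hf.mul hQD.differentiableOn
  have hfc : ContinuousOn f unitDisk := hf.continuousOn
  have hfsc : ContinuousOn fs unitDisk := hfc.mul hQD.continuous.continuousOn
  obtain ⟨M, hM⟩ := hb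
  set M0 : ℝ := max M 0 with hM0def
  have hM0 : ∀ z ∈ unitDisk, ‖f z‖ ≤ M0 := fun z hz =>
    (hM z hz).trans (le_max_left _ _)
  have hM0nn : 0 ≤ M0 := le_max_right _ _
  have hfs_le : ∀ z ∈ unitDisk, ‖fs z‖ ≤ (1 + δ) * ‖f z‖ := by
    intro z hz
    have : ‖fs z‖ = ‖f z‖ * ‖Q z‖ := by
      rw [hfsdef]; exact norm_mul _ _
    rw [this, mul_comm]
    exact mul_le_mul_of_nonneg_right (hQu z hz) (norm_nonneg _)
  have hf_le : ∀ z ∈ unitDisk, ‖f z‖ ≤ (1 - δ)⁻¹ * ‖fs z‖ := by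
    intro z hz
    have hδlt : (0:ℝ) < 1 - δ := by linarith
    have h1 : (1 - δ) * ‖f z‖ ≤ ‖fs z‖ := by
      have : ‖fs z‖ = ‖f z‖ * ‖Q z‖ := by
        rw [hfsdef]; exact norm_mul _ _
      rw [this, mul_comm]
      exact mul_le_mul_of_nonneg_left (hQl z hz) (norm_nonneg _)
    calc ‖f z‖ = (1 - δ)⁻¹ * ((1 - δ) * ‖f z‖) := by
          field_simp
      _ ≤ (1 - δ)⁻¹ * ‖fs z‖ :=
          mul_le_mul_of_nonneg_left h1 (inv_nonneg.mpr hδlt.le)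
  have hfs_bdd : ∀ z ∈ unitDisk, ‖fs z‖ ≤ (1 + δ) * M0 := fun z hz =>
    (hfs_le z hz).trans (mul_le_mul_of_nonneg_left (hM0 z hz) (by linarith))
  -- power series representation of f
  have hf' : DifferentiableOn ℂ f (Metric.ball (0:ℂ) 1) := hf
  have hrep : ∀ z ∈ Metric.ball (0:ℂ) 1, HasSum (fun m => c m * z ^ m) (f z) := by
    intro z hz
    have h := Complex.hasSum_taylorSeries_on_ball hf' hz
    have e : (fun m => c m * z ^ m)
        = fun m => ((m.factorial : ℂ))⁻¹ • (z - 0) ^ m • iteratedDeriv m f 0 := by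
      funext m
      rw [hcdef, coeff]
      simp only [sub_zero, smul_eq_mul]
      ring
    rw [e]; exact h
  -- power series representation of fs
  set b : ℕ → ℂ := fun m => ∑ j ∈ Finset.range (n + 1),
    if j ≤ m then q j * c (m - j) else 0 with hbdef
  have hrepfs : ∀ z ∈ Metric.ball (0:ℂ) 1, HasSum (fun m => b m * z ^ m) (fs z) := by
    intro z hz
    have h1 : ∀ j : ℕ, HasSum (fun m : ℕ => (if j ≤ m then q j * c (m - j) else 0) * z ^ m)
        (q j * z ^ j * f z) := by
      intro j
      have h0 := (hrep z hz).mul_left (q j * z ^ j)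
      rw [← Function.Injective.hasSum_iff (g := fun i => i + j) (add_left_injective j)
        (fun m hm => by
          have hj : ¬ j ≤ m := fun hle => hm ⟨m - j, by simp; omega⟩
          rw [if_neg hj, zero_mul])]
      have heq : ((fun m => (if j ≤ m then q j * c (m - j) else 0) * z ^ m) ∘ fun i => i + j)
          = fun i => (q j * z ^ j) * (c i * z ^ i) := by
        funext i
        simp only [Function.comp_apply, Nat.le_add_left, if_pos, Nat.add_sub_cancel]
        rw [pow_add]
        ring
      rw [heq]
      exact h0
    have h2 := hasSum_sum (s := Finset.range (n + 1)) (f := fun j m =>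
      (if j ≤ m then q j * c (m - j) else 0) * z ^ m)
      (a := fun j => q j * z ^ j * f z) (fun j _ => h1 j)
    have h3 : (fun m => ∑ j ∈ Finset.range (n + 1),
        (if j ≤ m then q j * c (m - j) else 0) * z ^ m) = fun m => b m * z ^ m := by
      funext m
      simp only [hbdef]
      rw [Finset.sum_mul]
    have h4 : (∑ j ∈ Finset.range (n + 1), q j * z ^ j * f z) = fs z := by
      simp only [hfsdef, hQdef]
      rw [mul_comm, Finset.sum_mul]
    rw [h3, h4] at h2
    exact h2
  have hcoe : ∀ k : ℕ, coeff fs k = b k := by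
    intro k
    apply coeff_eq_of_hasSum
    exact Filter.eventually_of_mem (Metric.ball_mem_nhds 0 one_pos) (fun z hz => hrepfs z hz)
  -- the coefficient identity
  have hcoeid : ∀ j : Fin (n + 1), coeff fs j = coeff f j + d j := by
    intro j
    set k : ℕ := (j : ℕ) with hk
    have hkn : k ≤ n := Nat.lt_succ_iff.mp j.isLt
    have e1 : b k = ∑ i ∈ Finset.range (k + 1), q i * c (k - i) := by
      simp only [hbdef]
      rw [← Finset.sum_subset (Finset.range_subset_range.mpr (by omega : k + 1 ≤ n + 1))
        (fun x _ hnx => if_neg fun hxk => hnx (Finset.mem_range.mpr (by omega)))]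
      exact Finset.sum_congr rfl fun i hi => if_pos (Nat.lt_succ_iff.mp (Finset.mem_range.mp hi))
    have e2 : ∑ i ∈ Finset.range (k + 1), q i * c (k - i)
        = (∑ i ∈ Finset.range (k + 1), (if i = 0 then (1:ℂ) else 0) * c (k - i))
          + ∑ i ∈ Finset.range (k + 1), tsolve c D i * c (k - i) := by
      rw [← Finset.sum_add_distrib]
      exact Finset.sum_congr rfl fun i _ => by rw [hqdef, add_mul]
    have e3 : (∑ i ∈ Finset.range (k + 1), (if i = 0 then (1:ℂ) else 0) * c (k - i)) = c k := by
      rw [Finset.sum_congr rfl fun i _ => by rw [ite_mul, one_mul, zero_mul]]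
      rw [Finset.sum_ite_eq' (Finset.range (k + 1)) 0 (fun i => c (k - i))]
      simp
    have e4 : (∑ i ∈ Finset.range (k + 1), tsolve c D i * c (k - i)) = D k := by
      rw [← tsolve_spec c D hc0 k]
      exact Finset.sum_congr rfl fun i _ => mul_comm _ _
    have e5 : D k = d j := by
      rw [hD, hextF]
      simp only
      rw [dif_pos j.isLt]
    rw [hcoe k, e1, e2, e3, e4, e5, hcdef]
  -- Hardy norm estimates
  have hbdd_f : BddAbove {x : ℝ | ∃ r : ℝ, 0 < r ∧ r < 1 ∧ x = hardyMean p f r} := by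
    refine ⟨M0, ?_⟩
    rintro x ⟨r, hr1, hr2, rfl⟩
    exact hardyMean_le_const hfc hp' hM0nn hM0 hr1 hr2
  have hbdd_fs : BddAbove {x : ℝ | ∃ r : ℝ, 0 < r ∧ r < 1 ∧ x = hardyMean p fs r} := by
    refine ⟨(1 + δ) * M0, ?_⟩
    rintro x ⟨r, hr1, hr2, rfl⟩
    exact hardyMean_le_const hfsc hp' (by positivity) hfs_bdd hr1 hr2
  have hupper : hardyNorm p fs ≤ (1 + δ) * hardyNorm p f :=
    hardyNorm_le_mul (by linarith)
      (fun r hr1 hr2 => hardyMean_le_of_le hfc hfsc hp' (by linarith) hfs_le hr1 hr2) hbdd_f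
  have hlower' : hardyNorm p f ≤ (1 - δ)⁻¹ * hardyNorm p fs :=
    hardyNorm_le_mul (inv_nonneg.mpr (by linarith))
      (fun r hr1 hr2 => hardyMean_le_of_le hfsc hfc hp' (inv_nonneg.mpr (by linarith))
        hf_le hr1 hr2) hbdd_fs
  have hlower : (1 - δ) * hardyNorm p f ≤ hardyNorm p fs := by
    have hδlt : (0:ℝ) < 1 - δ := by linarith
    calc (1 - δ) * hardyNorm p f ≤ (1 - δ) * ((1 - δ)⁻¹ * hardyNorm p fs) :=
          mul_le_mul_of_nonneg_left hlower' hδlt.le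
      _ = hardyNorm p fs := by field_simp
  refine ⟨fs, hfsD, ⟨(1 + δ) * M0, hfs_bdd⟩, fun z hz => mul_ne_zero (hzf z hz)
    (fun h => absurd (hQpos z hz) (by rw [h]; simp)), hcoeid, ?_⟩
  have habs : |hardyNorm p fs - hardyNorm p f| ≤ δ * hardyNorm p f := by
    rw [abs_le]
    constructor
    · nlinarith
    · nlinarith
  calc |hardyNorm p fs - hardyNorm p f| ≤ δ * hardyNorm p f := habs
    _ ≤ ((n + 1) * (K * ε)) * hardyNorm p f :=
        mul_le_mul_of_nonneg_right hδK hNf0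
    _ ≤ ((n + 1) * (K * ε)) * (hardyNorm p f + 1) := by
        apply mul_le_mul_of_nonneg_left (by linarith) (by positivity)
    _ = (n + 1) * K * (hardyNorm p f + 1) * ε := by ring
end
end

section
/- Let p_N(z) = c₀ + c₁z + … + c_N z^N be a polynomial with c₀ ≠ 0 that has no zeros on the closed unit disk, and assume its Bergman norm satisfies ‖p_N‖_{A₂}² = Σ_{k=0}^N |c_k|²/(k + 1) ≤ 1. Then there exists ε₀ > 0 such that for every ε ∈ (0, ε₀) the polynomial P_{N+1,ε}(z) = (1 − ε)c₀ + c₁z + … + c_N z^N + ε z^{N+1} has no zeros on the closed unit disk and satisfies ‖P_{N+1,ε}‖_{A₂} < ‖p_N‖_{A₂} ≤ 1. -/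
open Complex Metric Set

noncomputable section

lemma sum_split_aux {M : Type*} [AddCommMonoid M] (N : ℕ) (f : ℕ → M) :
    ∑ k ∈ Finset.range (N + 1), f k = f 0 + ∑ k ∈ Finset.Icc 1 N, f k := by
  induction N with
  | zero => simp
  | succ n ih =>
      rw [Finset.sum_range_succ, ih, Finset.sum_Icc_succ_top (by omega : 1 ≤ n + 1),
        add_assoc]

lemma final_aux (N : ℕ) (A ε S : ℝ) (hS : 0 ≤ S) (hApos : 0 < A) (hε : 0 < ε)
    (h5 : ε * (A ^ 2 + 1 / (N + 2)) < 2 * A ^ 2) :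
    Real.sqrt ((1 - ε) ^ 2 * A ^ 2 + S + ε ^ 2 / (N + 2)) < Real.sqrt (A ^ 2 + S) := by
  apply Real.sqrt_lt_sqrt (by positivity)
  have h7 := mul_lt_mul_of_pos_left h5 hε
  have h6 : ε ^ 2 / ((N : ℝ) + 2) = ε * (ε * (1 / ((N : ℝ) + 2))) := by ring
  nlinarith [h7, hε]

/-- if `p_N(z) = c₀ + c₁z + ⋯ + c_N z^N` (`c₀ ≠ 0`) has no zeros on the
closed unit disk and Bergman norm `‖p_N‖_{A₂} ≤ 1`, then for all small `ε > 0` the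
polynomial `P_{N+1,ε}(z) = (1-ε)c₀ + c₁z + ⋯ + c_N z^N + ε z^{N+1}` is also zero-free on
the closed unit disk and has strictly smaller Bergman norm. -/
theorem stmt17 (N : ℕ) (c : ℕ → ℂ) (hc0 : c 0 ≠ 0)
    (hz : ∀ z ∈ Metric.closedBall (0 : ℂ) 1,
      (∑ k ∈ Finset.range (N + 1), c k * z ^ k) ≠ 0)
    (hnorm : (∑ k ∈ Finset.range (N + 1), ‖c k‖ ^ 2 / (k + 1)) ≤ 1) :
    ∃ ε₀ > (0 : ℝ), ∀ ε : ℝ, 0 < ε → ε < ε₀ →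
      (∀ z ∈ Metric.closedBall (0 : ℂ) 1,
        ((1 - (ε : ℂ)) * c 0 + (∑ k ∈ Finset.Icc 1 N, c k * z ^ k) +
          (ε : ℂ) * z ^ (N + 1)) ≠ 0) ∧
      Real.sqrt (‖(1 - (ε : ℂ)) * c 0‖ ^ 2 +
          (∑ k ∈ Finset.Icc 1 N, ‖c k‖ ^ 2 / (k + 1)) +
          ε ^ 2 / (N + 2)) <
        Real.sqrt (∑ k ∈ Finset.range (N + 1), ‖c k‖ ^ 2 / (k + 1)) := by
  set p : ℂ → ℂ := fun z => ∑ k ∈ Finset.range (N + 1), c k * z ^ k with hp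
  have hpc : Continuous fun z => ‖p z‖ := by
    apply continuous_norm.comp
    exact continuous_finset_sum _ fun k _ => by continuity
  obtain ⟨z₀, hz₀, hmin⟩ := (isCompact_closedBall (0 : ℂ) 1).exists_isMinOn
    ⟨0, by simp⟩ hpc.continuousOn
  set m : ℝ := ‖p z₀‖ with hm
  have hmpos : 0 < m := by
    simpa [hm, norm_pos_iff] using hz z₀ hz₀
  set A : ℝ := ‖c 0‖ with hA
  have hApos : 0 < A := by simpa [hA, norm_pos_iff] using hc0
  have hden : (0 : ℝ) < A ^ 2 + 1 / (N + 2) := by positivity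
  refine ⟨min (m / (A + 1)) (2 * A ^ 2 / (A ^ 2 + 1 / (N + 2))), by positivity, ?_⟩
  intro ε hε hεlt
  have hε1 : ε < m / (A + 1) := lt_of_lt_of_le hεlt (min_le_left _ _)
  have hε2 : ε < 2 * A ^ 2 / (A ^ 2 + 1 / (N + 2)) := lt_of_lt_of_le hεlt (min_le_right _ _)
  constructor
  · intro z hzball
    have hPz : (1 - (ε : ℂ)) * c 0 + (∑ k ∈ Finset.Icc 1 N, c k * z ^ k) +
        (ε : ℂ) * z ^ (N + 1) = p z + (ε : ℂ) * (z ^ (N + 1) - c 0) := by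
      simp only [hp, sum_split_aux N (fun k => c k * z ^ k)]
      ring
    rw [hPz]
    intro hcontra
    have h1 : ‖p z‖ = ‖(ε : ℂ) * (z ^ (N + 1) - c 0)‖ := by
      have : p z = -((ε : ℂ) * (z ^ (N + 1) - c 0)) := by linear_combination hcontra
      rw [this, norm_neg]
    have hzle : ‖z‖ ≤ 1 := by
      simpa [Complex.dist_eq] using hzball
    have h2 : ‖(ε : ℂ) * (z ^ (N + 1) - c 0)‖ ≤ ε * (1 + A) := by
      rw [norm_mul, Complex.norm_real, Real.norm_eq_abs, abs_of_pos hε]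
      apply mul_le_mul_of_nonneg_left _ hε.le
      calc ‖z ^ (N + 1) - c 0‖ ≤ ‖z ^ (N + 1)‖ + ‖c 0‖ :=
            norm_sub_le _ _
        _ ≤ 1 + A := by
            rw [norm_pow]
            exact add_le_add (pow_le_one₀ (norm_nonneg z) hzle) le_rfl
    have h3 : m ≤ ‖p z‖ := hmin hzball
    have h4 : ε * (A + 1) < m := (lt_div_iff₀ (by positivity)).mp hε1
    nlinarith
  · have habs : ‖(1 - (ε : ℂ)) * c 0‖ ^ 2 = (1 - ε) ^ 2 * A ^ 2 := by
      rw [norm_mul]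
      have : (1 - (ε : ℂ)) = ((1 - ε : ℝ) : ℂ) := by push_cast; ring
      rw [this, Complex.norm_real, Real.norm_eq_abs, mul_pow, _root_.sq_abs, hA]
    have hsum : (∑ k ∈ Finset.range (N + 1), ‖c k‖ ^ 2 / (k + 1)) =
        A ^ 2 + ∑ k ∈ Finset.Icc 1 N, ‖c k‖ ^ 2 / (k + 1) := by
      rw [sum_split_aux N (fun k => ‖c k‖ ^ 2 / (k + 1))]
      norm_num [hA]
    have hS : (0 : ℝ) ≤ ∑ k ∈ Finset.Icc 1 N, ‖c k‖ ^ 2 / (k + 1) :=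
      Finset.sum_nonneg fun k _ => by positivity
    rw [habs, hsum]
    exact final_aux N A ε _ hS hApos hε ((lt_div_iff₀ hden).mp hε2)
end
end
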